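/- (Discretization intertwines the Hartley transforms.) Let N ≥ 1 be an integer and let f : ℝ → ℝ be a Schwartz function with Hartley transform g = 𝓗f. Define F(j) := ∑_{k∈ℤ} f(√(2π/N)(kN + j)) and G(j) := ∑_{k∈ℤ} g(√(2π/N)(kN + j)) for j = 0, …, N−1. Then G is the finite Hartley transform of F: G(k) = (1/√N) ∑_{j=0}^{N−1} cas(2πkj/N) F(j) for every k = 0, …, N−1. -/

import Mathlib

open MeasureTheory Real Complex FourierTransform Filter

/-- The cas function, `cas x = cos x - sin x`. -/
noncomputable def cas (x : ℝ) : ℝ := Real.cos x - Real.sin x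

/-- The Hartley transform `(𝓗 f)(λ) = (1/√(2π)) ∫ f(x) cas(λ x) dx`. -/
noncomputable def hartley (f : ℝ → ℝ) (l : ℝ) : ℝ :=
    (1 / Real.sqrt (2 * Real.pi)) * ∫ x : ℝ, f x * cas (l * x)

noncomputable def ofRealS (f : SchwartzMap ℝ ℝ) : SchwartzMap ℝ ℂ where
  toFun x := (f x : ℂ)
  smooth' := Complex.ofRealCLM.contDiff.comp (f.smooth ⊤)
  decay' := by
    intro k n
    obtain ⟨C, hC⟩ := f.decay' k n
    refine ⟨C, fun x => ?_⟩
    have h1 : (fun x => (f x : ℂ)) = ⇑Complex.ofRealLI ∘ ⇑f := rfl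
    have : ‖iteratedFDeriv ℝ n (⇑Complex.ofRealLI ∘ ⇑f) x‖ = ‖iteratedFDeriv ℝ n (⇑f) x‖ :=
      Complex.ofRealLI.norm_iteratedFDeriv_comp_left (x := x) (f.smooth ⊤).contDiffAt
        (by exact_mod_cast le_top)
    rw [h1, this]
    exact hC x

@[simp] lemma ofRealS_apply (f : SchwartzMap ℝ ℝ) (x : ℝ) : ofRealS f x = (f x : ℂ) := rfl

lemma schwartz_summable (h : SchwartzMap ℝ ℂ) : Summable fun n : ℤ => h n :=
  summable_of_isBigO (Real.summable_abs_int_rpow one_lt_two)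
    ((h.isBigO_cocompact_rpow (-2)).comp_tendsto Int.tendsto_coe_cofinite)

lemma fourier_affine (φ : ℝ → ℂ) {b : ℝ} (hb : 0 < b) (d ξ : ℝ) :
    𝓕 (fun x => φ (b*x + d)) ξ
      = (b⁻¹ : ℂ) * (Complex.exp (2*π*(d*ξ/b)*Complex.I) * 𝓕 φ (ξ/b)) := by
  have hb' : b ≠ 0 := hb.ne'
  rw [Real.fourier_real_eq, Real.fourier_real_eq]
  simp only [Circle.smul_def, Real.fourierChar_apply, smul_eq_mul]
  set g : ℝ → ℂ := fun u => Complex.exp (↑(2*π*(-(((u-d)/b)*ξ))) * Complex.I) * φ u with hg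
  have h1 : ∀ v : ℝ, Complex.exp (↑(2*π*(-(v*ξ))) * Complex.I) * φ (b*v + d) = g (b*(v + d/b)) := by
    intro v
    have e1 : b*(v + d/b) = b*v + d := by field_simp; try ring
    have e2 : (2*π*(-((((b*v+d)-d)/b)*ξ))) = 2*π*(-(v*ξ)) := by field_simp; try ring
    rw [hg]; simp only [e1, e2]
  have h2 : ∀ u : ℝ, g u = Complex.exp (2*π*(d*ξ/b)*Complex.I) *
      (Complex.exp (↑(2*π*(-(u*(ξ/b)))) * Complex.I) * φ u) := by
    intro u
    rw [hg]
    dsimp only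
    rw [← mul_assoc, ← Complex.exp_add]
    congr 2
    have hbc : (b:ℂ) ≠ 0 := by exact_mod_cast hb'
    push_cast
    field_simp
    ring
  calc (∫ v : ℝ, Complex.exp (↑(2*π*(-(v*ξ))) * Complex.I) * φ (b*v + d))
      = ∫ v : ℝ, g (b*(v + d/b)) := by simp only [h1]
    _ = ∫ v : ℝ, g (b*v) := integral_add_right_eq_self (fun v => g (b*v)) (d/b)
    _ = |b⁻¹| • ∫ u : ℝ, g u := MeasureTheory.Measure.integral_comp_mul_left g b
    _ = (b⁻¹ : ℂ) * ∫ u : ℝ, g u := by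
        rw [abs_of_pos (by positivity)]
        simp [real_smul]
    _ = (b⁻¹ : ℂ) * (Complex.exp (2*π*(d*ξ/b)*Complex.I) *
          ∫ u : ℝ, Complex.exp (↑(2*π*(-(u*(ξ/b)))) * Complex.I) * φ u) := by
        rw [show (∫ u : ℝ, g u) = ∫ u : ℝ, Complex.exp (2*π*(d*ξ/b)*Complex.I) *
          (Complex.exp (↑(2*π*(-(u*(ξ/b)))) * Complex.I) * φ u) from by simp only [h2]]
        rw [MeasureTheory.integral_const_mul]

lemma affine_temperate {b d : ℝ} : Function.HasTemperateGrowth (fun x : ℝ => b*x + d) := by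
  apply Function.HasTemperateGrowth.of_fderiv (k := 1) (C := |b| + |d|)
  · have : (fderiv ℝ (fun x : ℝ => b*x + d)) = fun _ =>
        ContinuousLinearMap.smulRight (1 : ℝ →L[ℝ] ℝ) b := by
      funext x
      simpa [ContinuousLinearMap.smulRight_one_eq_toSpanSingleton] using (((hasDerivAt_id x).const_mul b).add_const d).hasFDerivAt.fderiv
    rw [this]
    exact Function.HasTemperateGrowth.const _
  · exact (differentiable_id.const_mul b).add_const d
  · intro x
    simp only [Real.norm_eq_abs, pow_one]
    have h1 : |b*x + d| ≤ |b| * |x| + |d| := by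
      calc |b*x + d| ≤ |b*x| + |d| := abs_add_le _ _
        _ = |b| * |x| + |d| := by rw [abs_mul]
    nlinarith [abs_nonneg b, abs_nonneg d, abs_nonneg x]

lemma affine_antilipschitz {b : ℝ} (hb : b ≠ 0) (d : ℝ) :
    AntilipschitzWith (‖b‖₊⁻¹) (fun x : ℝ => b*x + d) := by
  apply AntilipschitzWith.of_le_mul_dist
  intro x y
  simp only [Real.dist_eq, coe_nnnorm, Real.norm_eq_abs]
  rw [show b*x + d - (b*y + d) = b*(x-y) by ring, abs_mul]
  rw [NNReal.coe_inv]
  have : (‖b‖₊ : ℝ) = |b| := rfl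
  rw [this]
  field_simp [abs_ne_zero.mpr hb]
  exact le_rfl

noncomputable def affS (h : SchwartzMap ℝ ℂ) {b : ℝ} (hb : b ≠ 0) (d : ℝ) : SchwartzMap ℝ ℂ :=
  SchwartzMap.compCLMOfAntilipschitz ℝ (affine_temperate (b := b) (d := d))
    (affine_antilipschitz hb d) h

@[simp] lemma affS_apply (h : SchwartzMap ℝ ℂ) {b : ℝ} (hb : b ≠ 0) (d x : ℝ) :
    affS h hb d x = h (b*x + d) := rfl

lemma poisson_affine (h : SchwartzMap ℝ ℂ) {b : ℝ} (hb : 0 < b) (d : ℝ) :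
    ∑' n : ℤ, h (b*n + d)
      = ∑' n : ℤ, (b⁻¹ : ℂ) * (Complex.exp (2*π*(d*n/b)*Complex.I) * 𝓕 (⇑h) (n/b)) := by
  have key := SchwartzMap.tsum_eq_tsum_fourier (affS h hb.ne' d) 0
  have hcoe : ⇑(affS h hb.ne' d) = fun x : ℝ => h (b*x + d) := funext fun x => affS_apply h hb.ne' d x
  simp only [SchwartzMap.fourier_coe, zero_add] at key
  have h1 : ∀ n : ℤ, (fourier n ((0:ℝ) : UnitAddCircle)) = 1 := by
    intro n
    rw [fourier_coe_apply]
    simp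
  simp only [h1, mul_one, hcoe] at key
  calc ∑' n : ℤ, h (b*n + d) = ∑' n : ℤ, 𝓕 (fun x : ℝ => h (b*x + d)) n := key
    _ = _ := by
        congr 1 with n
        exact fourier_affine (⇑h) hb d n

lemma cas_complex (θ : ℝ) : ((cas θ : ℝ) : ℂ)
    = (1+Complex.I)/2 * Complex.exp (θ*Complex.I) + (1-Complex.I)/2 * Complex.exp (-θ*Complex.I) := by
  rw [show -(θ:ℂ)*Complex.I = (-θ:ℝ)*Complex.I by push_cast; ring]
  rw [Complex.exp_mul_I, Complex.exp_mul_I]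
  simp only [cas, Complex.ofReal_sub, Complex.ofReal_cos, Complex.ofReal_sin, Complex.ofReal_neg,
    Complex.cos_neg, Complex.sin_neg]
  ring_nf
  simp [Complex.I_sq]
  ring

lemma geom_char_sum (N : ℕ) (hN : 1 ≤ N) (m : ℤ) :
    ∑ j ∈ Finset.range N, Complex.exp (2*π*Complex.I*m*j/N)
      = if (N:ℤ) ∣ m then (N:ℂ) else 0 := by
  have hNR : (N:ℂ) ≠ 0 := Nat.cast_ne_zero.mpr (by omega)
  set z : ℂ := Complex.exp (2*π*Complex.I*m/N) with hz
  have hpow : ∀ j : ℕ, Complex.exp (2*π*Complex.I*m*j/N) = z ^ j := by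
    intro j
    rw [hz, ← Complex.exp_nat_mul]
    congr 1
    ring
  simp only [hpow]
  by_cases hdvd : (N:ℤ) ∣ m
  · obtain ⟨t, ht⟩ := hdvd
    have hz1 : z = 1 := by
      rw [hz, ht]
      rw [show 2*π*Complex.I*((N:ℤ)*t : ℤ)/N = (t:ℤ) * (2*π*Complex.I) by
        push_cast; field_simp]
      exact Complex.exp_int_mul_two_pi_mul_I t
    rw [if_pos ⟨t, ht⟩]
    simp [hz1]
  · have hz1 : z ≠ 1 := by
      intro hz1
      rw [hz, Complex.exp_eq_one_iff] at hz1
      obtain ⟨t, ht⟩ := hz1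
      apply hdvd
      refine ⟨t, ?_⟩
      have h2 : (2*π*Complex.I) ≠ 0 := by
        simp [Complex.I_ne_zero, Real.pi_ne_zero]
      have : (m:ℂ) = N * t := by
        field_simp at ht
        have h3 : (m:ℂ) * (2*π*Complex.I) = ((N:ℂ)*t) * (2*π*Complex.I) := by
          linear_combination (2*π*Complex.I) * ht
        exact mul_right_cancel₀ h2 h3
      exact_mod_cast this
    have hzN : z ^ N = 1 := by
      rw [hz, ← Complex.exp_nat_mul]
      rw [show (N:ℂ) * (2*π*Complex.I*m/N) = (m:ℤ) * (2*π*Complex.I) by field_simp]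
      exact Complex.exp_int_mul_two_pi_mul_I m
    rw [if_neg hdvd, geom_sum_eq hz1, hzN]
    simp

lemma cas_char_sum (N : ℕ) (hN : 1 ≤ N) (k : ℕ) (n : ℤ) :
    ∑ j ∈ Finset.range N, ((cas (2*π*k*j/N) : ℝ) : ℂ) * Complex.exp (2*π*Complex.I*n*j/N)
      = (N:ℂ) * ((1+Complex.I)/2 * (if (N:ℤ) ∣ (n+k) then 1 else 0)
                + (1-Complex.I)/2 * (if (N:ℤ) ∣ (n-k) then 1 else 0)) := by
  have hNC : (N:ℂ) ≠ 0 := Nat.cast_ne_zero.mpr (by omega)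
  have key : ∀ j ∈ Finset.range N,
      ((cas (2*π*k*j/N) : ℝ) : ℂ) * Complex.exp (2*π*Complex.I*n*j/N)
        = (1+Complex.I)/2 * Complex.exp (2*π*Complex.I*((n+k : ℤ))*j/N)
        + (1-Complex.I)/2 * Complex.exp (2*π*Complex.I*((n-k : ℤ))*j/N) := by
    intro j _
    rw [cas_complex, add_mul]
    simp only [mul_assoc, ← Complex.exp_add]
    congr 3
    · push_cast; field_simp; ring
    · push_cast; field_simp; ring
  rw [Finset.sum_congr rfl key, Finset.sum_add_distrib, ← Finset.mul_sum, ← Finset.mul_sum,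
    geom_char_sum N hN (n+k), geom_char_sum N hN (n-k)]
  split_ifs <;> ring

lemma exp_mul_integrable (f : SchwartzMap ℝ ℝ) (w : ℝ) :
    Integrable (fun x : ℝ => Complex.exp (↑(-2*π*x*w) * Complex.I) * (ofRealS f) x) := by
  apply Integrable.bdd_mul (c := 1) (ofRealS f).integrable
  · exact (Complex.continuous_exp.comp (by fun_prop)).aestronglyMeasurable
  · exact Filter.Eventually.of_forall (fun x => le_of_eq (by rw [Complex.norm_exp_ofReal_mul_I]))

lemma hartley_eq (f : SchwartzMap ℝ ℝ) (l : ℝ) :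
    ((hartley (fun x => f x) l : ℝ) : ℂ)
      = ((Real.sqrt (2*π) : ℝ) : ℂ)⁻¹ *
          ((1+Complex.I)/2 * 𝓕 (⇑(ofRealS f)) (-(l/(2*π)))
          + (1-Complex.I)/2 * 𝓕 (⇑(ofRealS f)) (l/(2*π))) := by
  have hπ : π ≠ 0 := Real.pi_ne_zero
  have key : ∀ x : ℝ, ((f x : ℝ) : ℂ) * ((cas (l*x) : ℝ) : ℂ)
      = (1+Complex.I)/2 * (Complex.exp (↑(-2*π*x*(-(l/(2*π)))) * Complex.I) * (ofRealS f) x)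
      + (1-Complex.I)/2 * (Complex.exp (↑(-2*π*x*(l/(2*π))) * Complex.I) * (ofRealS f) x) := by
    intro x
    have e1 : (-2*π*x*(-(l/(2*π)))) = l*x := by field_simp
    have e2 : (-2*π*x*(l/(2*π))) = -(l*x) := by field_simp
    rw [e1, e2, cas_complex (l*x), ofRealS_apply]
    push_cast
    ring
  have hI1 := exp_mul_integrable f (-(l/(2*π)))
  have hI2 := exp_mul_integrable f (l/(2*π))
  calc ((hartley (fun x => f x) l : ℝ) : ℂ)
      = ((Real.sqrt (2*π) : ℝ) : ℂ)⁻¹ * ∫ x : ℝ, ((f x : ℝ) : ℂ) * ((cas (l*x) : ℝ) : ℂ) := by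
        rw [hartley]
        have hcast : (∫ x : ℝ, ((f x * cas (l*x) : ℝ) : ℂ)) = ((∫ x : ℝ, f x * cas (l*x) : ℝ) : ℂ) :=
          integral_ofReal
        push_cast
        rw [← hcast]
        push_cast
        rw [one_div]
    _ = ((Real.sqrt (2*π) : ℝ) : ℂ)⁻¹ *
          ∫ x : ℝ, ((1+Complex.I)/2 * (Complex.exp (↑(-2*π*x*(-(l/(2*π)))) * Complex.I) * (ofRealS f) x)
          + (1-Complex.I)/2 * (Complex.exp (↑(-2*π*x*(l/(2*π))) * Complex.I) * (ofRealS f) x)) := by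
        congr 1
        exact integral_congr_ae (Filter.Eventually.of_forall key)
    _ = _ := by
        congr 1
        rw [integral_add (hI1.const_mul _) (hI2.const_mul _), MeasureTheory.integral_const_mul,
          MeasureTheory.integral_const_mul]
        rw [Real.fourier_real_eq_integral_exp_smul, Real.fourier_real_eq_integral_exp_smul]
        simp only [smul_eq_mul]

/-- Discretization intertwines the continuous and finite Hartley transforms: if
`g = 𝓗 f` with `f` Schwartz, and
`F(j) = ∑_{k ∈ ℤ} f(√(2π/N)(kN + j))`, `G(j) = ∑_{k ∈ ℤ} g(√(2π/N)(kN + j))`,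
then `G(k) = (1/√N) ∑_{j<N} cas(2πkj/N) F(j)`. -/
theorem discretization_intertwines_hartley (N : ℕ) (hN : 1 ≤ N)
    (f : SchwartzMap ℝ ℝ) (g F G : ℝ → ℝ)
    (hg : ∀ l : ℝ, g l = hartley (fun x => f x) l)
    (hF : ∀ j : ℕ, F j = ∑' k : ℤ, f (Real.sqrt (2 * Real.pi / N) * (k * N + j)))
    (hG : ∀ j : ℕ, G j = ∑' k : ℤ, g (Real.sqrt (2 * Real.pi / N) * (k * N + j))) :
    ∀ k : ℕ, k < N →
      G k = (1 / Real.sqrt N) *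
        ∑ j ∈ Finset.range N, cas (2 * Real.pi * k * j / N) * F j := by
  intro k hk
  have hNR : (0:ℝ) < N := by exact_mod_cast hN
  have hNne : (N:ℝ) ≠ 0 := hNR.ne'
  set a : ℝ := Real.sqrt (2 * Real.pi / N) with ha_def
  have ha : 0 < a := Real.sqrt_pos.mpr (by positivity)
  set c : ℝ := a * N with hc_def
  have hc : 0 < c := by positivity
  have haa : a * a = 2 * π / N := Real.mul_self_sqrt (by positivity)
  have hac : a * c = 2 * π := by
    rw [hc_def, ← mul_assoc, haa]; field_simp
  have hcC : (c:ℂ) ≠ 0 := by exact_mod_cast hc.ne'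
  have haC : (a:ℂ) ≠ 0 := by exact_mod_cast ha.ne'
  have hNC : (N:ℂ) ≠ 0 := by exact_mod_cast hNne
  have hcCC : (c:ℂ) = (a:ℂ) * (N:ℂ) := by rw [hc_def]; push_cast; ring
  set Fc : ℝ → ℂ := 𝓕 (⇑(ofRealS f)) with hFc_def
  have hFcS : ⇑(SchwartzMap.fourierTransformCLM ℝ (ofRealS f)) = Fc := by
    funext ξ; rw [SchwartzMap.fourierTransformCLM_apply, SchwartzMap.fourier_coe]
  have sumFc : ∀ (b d : ℝ), b ≠ 0 → Summable (fun m : ℤ => Fc (b*m + d)) := by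
    intro b d hb
    have h1 := schwartz_summable (affS (SchwartzMap.fourierTransformCLM ℝ (ofRealS f)) hb d)
    simpa only [affS_apply, hFcS] using h1
  -- complexified F
  have hFC : ∀ j : ℕ, ((F j : ℝ) : ℂ)
      = ∑' n : ℤ, (c⁻¹:ℂ) * (Complex.exp (2*π*Complex.I*n*j/N) * Fc ((n:ℝ)/c)) := by
    intro j
    rw [hF j, Complex.ofReal_tsum]
    have harg : ∀ n : ℤ, a * ((n:ℝ) * N + j) = c * (n:ℝ) + a * j := by
      intro n; rw [hc_def]; ring
    have step1 : ∑' n : ℤ, ((f (a * ((n:ℝ) * N + j)) : ℝ) : ℂ)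
        = ∑' n : ℤ, (ofRealS f) (c * (n:ℝ) + a * (j:ℝ)) :=
      tsum_congr (fun n => by rw [ofRealS_apply, harg n])
    rw [step1, poisson_affine (ofRealS f) hc (a*(j:ℝ))]
    apply tsum_congr; intro n
    congr 2
    congr 1
    rw [hcCC]
    push_cast
    field_simp [haC, hNC]
  -- complexified G
  have hGC : ((G k : ℝ) : ℂ) = ((Real.sqrt (2*π) : ℝ):ℂ)⁻¹ *
      ((1+Complex.I)/2 * ∑' m:ℤ, Fc (((m:ℝ)*N - k)/c)
      + (1-Complex.I)/2 * ∑' m:ℤ, Fc (((m:ℝ)*N + k)/c)) := by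
    rw [hG k, Complex.ofReal_tsum]
    have e : ∀ m : ℤ, a*((m:ℝ)*N + k)/(2*π) = ((m:ℝ)*N + k)/c := by
      intro m
      rw [← hac, mul_div_mul_left _ _ ha.ne']
    have h1 : ∀ m : ℤ, ((g (a*((m:ℝ)*N+k)) : ℝ):ℂ) = ((Real.sqrt (2*π):ℝ):ℂ)⁻¹ *
        ((1+Complex.I)/2 * Fc (-(((m:ℝ)*N+k)/c)) + (1-Complex.I)/2 * Fc (((m:ℝ)*N+k)/c)) := by
      intro m
      rw [hg, hartley_eq, e m]
    rw [tsum_congr h1, tsum_mul_left]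
    congr 1
    have s2 : Summable (fun m:ℤ => Fc (((m:ℝ)*N + k)/c)) := by
      apply (sumFc (N/c) (k/c) (by positivity)).congr
      intro m; congr 1; field_simp
    have s1 : Summable (fun m:ℤ => Fc (-(((m:ℝ)*N + k)/c))) := by
      apply (sumFc (-(N/c)) (-(k/c)) (by simp [hNne, hc.ne'])).congr
      intro m; congr 1; field_simp; ring
    rw [Summable.tsum_add (s1.mul_left _) (s2.mul_left _), tsum_mul_left, tsum_mul_left]
    congr 2
    rw [← (Equiv.neg ℤ).tsum_eq (f := fun m:ℤ => Fc (((m:ℝ)*N - k)/c))]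
    apply tsum_congr; intro m
    simp only [Equiv.neg_apply]
    congr 1
    push_cast
    ring
  -- summability tools
  have base : Summable (fun n:ℤ => Fc ((n:ℝ)/c)) := by
    apply (sumFc c⁻¹ 0 (inv_ne_zero hc.ne')).congr
    intro m; congr 1; field_simp; simp
  have habs : ∀ (j:ℕ) (n:ℤ), ‖Complex.exp (2*π*Complex.I*n*j/N)‖ = 1 := by
    intro j n
    rw [show (2*π*Complex.I*n*j/N : ℂ) = ((2*π*n*j/N : ℝ) : ℂ) * Complex.I by push_cast; ring]
    exact Complex.norm_exp_ofReal_mul_I _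
  have hsummand : ∀ j:ℕ, Summable (fun n:ℤ =>
      ((cas (2*π*k*j/N) : ℝ):ℂ) * ((c⁻¹:ℂ) * (Complex.exp (2*π*Complex.I*n*j/N) * Fc ((n:ℝ)/c)))) := by
    intro j
    apply Summable.of_norm_bounded
      (g := fun n : ℤ => (‖((cas (2*π*k*j/N) : ℝ):ℂ)‖ * ‖(c⁻¹:ℂ)‖) * ‖Fc ((n:ℝ)/c)‖)
      ((summable_norm_iff.mpr base).mul_left _)
    intro n
    apply le_of_eq
    rw [norm_mul, norm_mul, norm_mul, habs j n]
    ring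
  have hNZ : (N:ℤ) ≠ 0 := by exact_mod_cast (by omega : N ≠ 0)
  have hi1 : Function.Injective (fun m:ℤ => m*(N:ℤ) - k) := by
    intro x y h
    simp only at h
    have hxy : x * (N:ℤ) = y * N := by linarith
    exact mul_right_cancel₀ hNZ hxy
  have hi2 : Function.Injective (fun m:ℤ => m*(N:ℤ) + k) := by
    intro x y h
    simp only at h
    have hxy : x * (N:ℤ) = y * N := by linarith
    exact mul_right_cancel₀ hNZ hxy
  have hsupp1 : ∀ n ∉ Set.range (fun m:ℤ => m*(N:ℤ) - k),
      (if (N:ℤ) ∣ (n+k) then Fc ((n:ℝ)/c) else 0) = 0 := by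
    intro n hn
    have hnd : ¬ ((N:ℤ) ∣ (n+k)) := by
      rintro ⟨t, ht⟩
      exact hn ⟨t, by linear_combination -ht⟩
    rw [if_neg hnd]
  have hsupp2 : ∀ n ∉ Set.range (fun m:ℤ => m*(N:ℤ) + k),
      (if (N:ℤ) ∣ (n-k) then Fc ((n:ℝ)/c) else 0) = 0 := by
    intro n hn
    have hnd : ¬ ((N:ℤ) ∣ (n-k)) := by
      rintro ⟨t, ht⟩
      exact hn ⟨t, by linear_combination -ht⟩
    rw [if_neg hnd]
  have hval1 : ∀ m:ℤ, (if (N:ℤ) ∣ ((m*(N:ℤ)-k)+k) then Fc (((m*(N:ℤ)-k : ℤ):ℝ)/c) else 0)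
      = Fc (((m:ℝ)*N - k)/c) := by
    intro m
    rw [if_pos ⟨m, by ring⟩]
    congr 2
    push_cast
    ring
  have hval2 : ∀ m:ℤ, (if (N:ℤ) ∣ ((m*(N:ℤ)+k)-k) then Fc (((m*(N:ℤ)+k : ℤ):ℝ)/c) else 0)
      = Fc (((m:ℝ)*N + k)/c) := by
    intro m
    rw [if_pos ⟨m, by ring⟩]
    congr 2
    push_cast
    ring
  have sumP : Summable (fun n:ℤ => if (N:ℤ) ∣ (n+k) then Fc ((n:ℝ)/c) else 0) := by
    rw [← hi1.summable_iff hsupp1]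
    apply Summable.congr _ (fun m => (hval1 m).symm)
    apply (sumFc (N/c) (-(k/c)) (by positivity)).congr
    intro m; congr 1; push_cast; field_simp; ring
  have sumQ : Summable (fun n:ℤ => if (N:ℤ) ∣ (n-k) then Fc ((n:ℝ)/c) else 0) := by
    rw [← hi2.summable_iff hsupp2]
    apply Summable.congr _ (fun m => (hval2 m).symm)
    apply (sumFc (N/c) (k/c) (by positivity)).congr
    intro m; congr 1; push_cast; field_simp
  have tsumP : (∑' n:ℤ, if (N:ℤ) ∣ (n+k) then Fc ((n:ℝ)/c) else 0)
      = ∑' m:ℤ, Fc (((m:ℝ)*N - k)/c) := by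
    rw [← hi1.tsum_eq (fun n hn => by
      by_contra hmem
      exact hn (hsupp1 n hmem))]
    exact tsum_congr hval1
  have tsumQ : (∑' n:ℤ, if (N:ℤ) ∣ (n-k) then Fc ((n:ℝ)/c) else 0)
      = ∑' m:ℤ, Fc (((m:ℝ)*N + k)/c) := by
    rw [← hi2.tsum_eq (fun n hn => by
      by_contra hmem
      exact hn (hsupp2 n hmem))]
    exact tsum_congr hval2
  -- the finite Hartley sum, complexified
  have hRHSC : (∑ j ∈ Finset.range N, ((cas (2*π*k*j/N) : ℝ):ℂ) * ((F j :ℝ):ℂ))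
      = (c⁻¹:ℂ) * N * ((1+Complex.I)/2 * ∑' m:ℤ, Fc (((m:ℝ)*N - k)/c)
                      + (1-Complex.I)/2 * ∑' m:ℤ, Fc (((m:ℝ)*N + k)/c)) := by
    calc (∑ j ∈ Finset.range N, ((cas (2*π*k*j/N) : ℝ):ℂ) * ((F j :ℝ):ℂ))
        = ∑ j ∈ Finset.range N, ∑' n:ℤ, ((cas (2*π*k*j/N) : ℝ):ℂ) *
            ((c⁻¹:ℂ) * (Complex.exp (2*π*Complex.I*n*j/N) * Fc ((n:ℝ)/c))) := by
          apply Finset.sum_congr rfl; intro j _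
          rw [hFC j, ← tsum_mul_left]
      _ = ∑' n:ℤ, ∑ j ∈ Finset.range N, ((cas (2*π*k*j/N) : ℝ):ℂ) *
            ((c⁻¹:ℂ) * (Complex.exp (2*π*Complex.I*n*j/N) * Fc ((n:ℝ)/c))) :=
          (Summable.tsum_finsetSum (fun j _ => hsummand j)).symm
      _ = ∑' n:ℤ, (((c⁻¹:ℂ) * N * ((1+Complex.I)/2)) * (if (N:ℤ) ∣ (n+k) then Fc ((n:ℝ)/c) else 0)
          + ((c⁻¹:ℂ) * N * ((1-Complex.I)/2)) * (if (N:ℤ) ∣ (n-k) then Fc ((n:ℝ)/c) else 0)) := by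
          apply tsum_congr; intro n
          calc ∑ j ∈ Finset.range N, ((cas (2*π*k*j/N) : ℝ):ℂ) *
                ((c⁻¹:ℂ) * (Complex.exp (2*π*Complex.I*n*j/N) * Fc ((n:ℝ)/c)))
              = ((c⁻¹:ℂ) * Fc ((n:ℝ)/c)) * ∑ j ∈ Finset.range N,
                  ((cas (2*π*k*j/N) : ℝ):ℂ) * Complex.exp (2*π*Complex.I*n*j/N) := by
                rw [Finset.mul_sum]
                apply Finset.sum_congr rfl; intro j _; ring
            _ = ((c⁻¹:ℂ) * Fc ((n:ℝ)/c)) * ((N:ℂ) *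
                  ((1+Complex.I)/2 * (if (N:ℤ) ∣ (n+k) then 1 else 0)
                  + (1-Complex.I)/2 * (if (N:ℤ) ∣ (n-k) then 1 else 0))) := by
                rw [cas_char_sum N hN k n]
            _ = _ := by split_ifs <;> ring
      _ = ((c⁻¹:ℂ) * N * ((1+Complex.I)/2)) * (∑' n:ℤ, if (N:ℤ) ∣ (n+k) then Fc ((n:ℝ)/c) else 0)
          + ((c⁻¹:ℂ) * N * ((1-Complex.I)/2)) * (∑' n:ℤ, if (N:ℤ) ∣ (n-k) then Fc ((n:ℝ)/c) else 0) := by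
          rw [Summable.tsum_add (sumP.mul_left _) (sumQ.mul_left _), tsum_mul_left, tsum_mul_left]
      _ = _ := by rw [tsumP, tsumQ]; ring
  -- coefficient identity
  have hsN : (0:ℝ) < Real.sqrt N := Real.sqrt_pos.mpr hNR
  have h2π : (0:ℝ) < Real.sqrt (2*π) := Real.sqrt_pos.mpr (by positivity)
  have hkey : a * Real.sqrt N = Real.sqrt (2*π) := by
    rw [ha_def, ← Real.sqrt_mul (by positivity)]
    congr 1
    field_simp
  have hcval : c = Real.sqrt (2*π) * Real.sqrt N := by
    rw [hc_def, ← hkey, mul_assoc, Real.mul_self_sqrt (Nat.cast_nonneg N)]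
  have hcoefR : (Real.sqrt (2*π))⁻¹ = (1/Real.sqrt N) * (c⁻¹ * N) := by
    rw [hcval]
    rw [show (N:ℝ) = Real.sqrt N * Real.sqrt N from (Real.mul_self_sqrt (Nat.cast_nonneg N)).symm]
    field_simp
    rw [Real.sqrt_sq hsN.le]
  have hcoefC : ((Real.sqrt (2*π) : ℝ):ℂ)⁻¹ = ((1 / Real.sqrt N : ℝ):ℂ) * ((c⁻¹:ℂ) * N) := by
    exact_mod_cast congrArg Complex.ofReal hcoefR
  have final : ((G k : ℝ):ℂ) = ((1 / Real.sqrt N : ℝ):ℂ) *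
      ∑ j ∈ Finset.range N, ((cas (2*π*k*j/N):ℝ):ℂ) * ((F j:ℝ):ℂ) := by
    rw [hGC, hRHSC, hcoefC]
    ring
  have goalC : ((G k : ℝ):ℂ) = (((1 / Real.sqrt N) *
      ∑ j ∈ Finset.range N, cas (2 * Real.pi * k * j / N) * F j : ℝ) : ℂ) := by
    rw [final]
    push_cast
    rfl
  exact_mod_cast goalC
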